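/- In the virtual-stake dynamics with α ∈ [0,1] and per-round unit budget distributed proportionally to virtual stake, the stake share of player i converges: σ_i^t / S^t → w_i^1 as t → ∞, where S^t = Σ_j σ_j^t and w_i^1 = (α·τ_i + (1−α)·σ_i^1) / Σ_j (α·τ_j + (1−α)·σ_j^1). -/

import Mathlib

open Finset Filter

theorem stmt12 {n : ℕ} (α : ℝ) (hα0 : 0 ≤ α) (hα1 : α ≤ 1)
    (τ : Fin n → ℝ) (hτ : ∀ i, 0 ≤ τ i)
    (σ : ℕ → Fin n → ℝ) (hσ : ∀ t, 1 ≤ t → ∀ i, 0 ≤ σ t i)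
    (W : ℕ → ℝ) (hW : ∀ t, W t = ∑ i, (α * τ i + (1 - α) * σ t i))
    (hWpos : ∀ t, 1 ≤ t → 0 < W t)
    (hupd : ∀ t, 1 ≤ t → ∀ i,
      σ (t + 1) i = σ t i + (α * τ i + (1 - α) * σ t i) / W t) :
    ∀ i : Fin n,
      Tendsto (fun t : ℕ => σ t i / ∑ j, σ t j) atTop
        (nhds ((α * τ i + (1 - α) * σ 1 i) / W 1)) := by
  intro i
  have hW1 : 0 < W 1 := hWpos 1 le_rfl
  set p : Fin n → ℝ := fun j => α * τ j + (1 - α) * σ 1 j with hpdef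
  set w : Fin n → ℝ := fun j => p j / W 1 with hwdef
  have hsum_p : ∑ j, p j = W 1 := (hW 1).symm
  have hsum_w : ∑ j, w j = 1 := by
    simp only [hwdef]
    rw [← Finset.sum_div, hsum_p, div_self hW1.ne']
  -- closed form for σ
  have hform : ∀ t : ℕ, ∀ j, σ (t + 1) j = σ 1 j + t * w j := by
    intro t
    induction t with
    | zero => intro j; simp
    | succ t ih =>
      intro j
      have hWt : W (t + 1) = W 1 + (1 - α) * t := by
        rw [hW (t + 1)]
        have hc : ∀ k, α * τ k + (1 - α) * σ (t + 1) k
            = p k + ((1 - α) * t) * w k := by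
          intro k; rw [ih k]; simp only [hpdef]; ring
        rw [Finset.sum_congr rfl fun k _ => hc k, Finset.sum_add_distrib,
          hsum_p, ← Finset.mul_sum, hsum_w, mul_one]
      have hpos : 0 < W 1 + (1 - α) * t := hWt ▸ hWpos (t + 1) (by omega)
      rw [hupd (t + 1) (by omega) j, ih j, hWt]
      simp only [hwdef, hpdef]
      push_cast
      have hpos' : W 1 + (t : ℝ) * (1 - α) ≠ 0 := by rw [mul_comm]; exact hpos.ne'
      field_simp [hpos.ne', hpos']
      ring
  -- sum formula
  have hsumform : ∀ t : ℕ, ∑ j, σ (t + 1) j = (∑ j, σ 1 j) + t := by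
    intro t
    rw [Finset.sum_congr rfl fun k _ => hform t k, Finset.sum_add_distrib,
      ← Finset.mul_sum, hsum_w, mul_one]
  rw [show (α * τ i + (1 - α) * σ 1 i) / W 1 = w i from rfl,
    ← tendsto_add_atTop_iff_nat 1]
  set a : ℝ := σ 1 i
  set b : ℝ := ∑ j, σ 1 j with hbdef
  have hb : 0 ≤ b := Finset.sum_nonneg fun j _ => hσ 1 le_rfl j
  have h1 : Tendsto (fun t : ℕ => b + (t : ℝ)) atTop atTop :=
    tendsto_atTop_add_const_left _ _ tendsto_natCast_atTop_atTop
  have h2 : Tendsto (fun t : ℕ => w i + (a - b * w i) / (b + t)) atTop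
      (nhds (w i)) := by
    have := Tendsto.div_atTop (tendsto_const_nhds (x := a - b * w i)) h1
    simpa using tendsto_const_nhds.add this
  refine h2.congr' ?_
  filter_upwards [eventually_ge_atTop 1] with t ht
  have ht1 : (1 : ℝ) ≤ (t : ℝ) := Nat.one_le_cast.mpr ht
  have hpos : (0 : ℝ) < b + t := by linarith
  rw [hform t i, hsumform t]
  field_simp
  ring
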